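/- Aggregating per-sample mutual information bounds into per-dataset bounds: Let b ∈ (0, ∞], let ψ : [0, b) → ℝ be convex with ψ(0) = ψ'(0) = 0, and define ψ*^{-1}(y) = inf_{λ∈(0,b)} (y + ψ(λ))/λ. Let S_k = (Z_{1,k}, ..., Z_{n,k}) consist of independent random variables for each k = 1, ..., K, and let W_k be a random variable (e.g., W_k = A_k(S_k)). Then (1/(nK²)) Σ_{i=1}^n Σ_{k=1}^K ψ*^{-1}(I(W_k; Z_{i,k})) ≤ (1/K²) Σ_{k=1}^K ψ*^{-1}(I(W_k; S_k)/n). -/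

import Mathlib

open MeasureTheory ProbabilityTheory
open scoped ENNReal Classical

open Real

/-- Kullback–Leibler divergence `KL(μ ‖ ν)` (equal to `∞` when `μ` is not absolutely
continuous w.r.t. `ν` or when the log-likelihood ratio is not integrable). -/
noncomputable def klDiv {α : Type*} [MeasurableSpace α] (μ ν : Measure α) : ℝ≥0∞ :=
  if μ ≪ ν ∧ Integrable (llr μ ν) μ then ENNReal.ofReal (∫ x, llr μ ν x ∂μ) else ∞

/-- Mutual information `I(X;Y)`: the KL divergence of the joint distribution of `(X, Y)`
from the product of the marginal distributions. -/
noncomputable def mutualInfo {Ω α β : Type*} [MeasurableSpace Ω] [MeasurableSpace α]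
    [MeasurableSpace β] (P : Measure Ω) (X : Ω → α) (Y : Ω → β) : ℝ≥0∞ :=
  klDiv (P.map fun ω => (X ω, Y ω)) ((P.map X).prod (P.map Y))

/-- `ψ*⁻¹(y) = inf_{λ ∈ (0,b)} (y + ψ(λ))/λ` for `b ∈ (0, ∞]`, as an
extended-real-valued function. -/
noncomputable def psiInv (b : ℝ≥0∞) (ψ : ℝ → ℝ) (y : ℝ≥0∞) : ℝ≥0∞ :=
  ⨅ lam : {l : ℝ // 0 < l ∧ ENNReal.ofReal l < b},
    (y + ENNReal.ofReal (ψ lam)) / ENNReal.ofReal lam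







section psiInvLemmas

variable {b : ℝ≥0∞} {ψ : ℝ → ℝ}

lemma psiInv_index_nonempty (hb : 0 < b) :
    Nonempty {l : ℝ // 0 < l ∧ ENNReal.ofReal l < b} := by
  rcases eq_or_ne b ∞ with rfl | hbt
  · exact ⟨⟨1, one_pos, by simp⟩⟩
  · refine ⟨⟨b.toReal / 2, ?_, ?_⟩⟩
    · have : 0 < b.toReal := ENNReal.toReal_pos hb.ne' hbt
      linarith
    · rw [ENNReal.ofReal_lt_iff_lt_toReal (by positivity) hbt]
      have : 0 < b.toReal := ENNReal.toReal_pos hb.ne' hbt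
      linarith

lemma psiInv_mono {y y' : ℝ≥0∞} (h : y ≤ y') : psiInv b ψ y ≤ psiInv b ψ y' :=
  iInf_mono fun lam => by gcongr

lemma psiInv_top (hb : 0 < b) : psiInv b ψ ∞ = ∞ := by
  haveI := psiInv_index_nonempty hb
  rw [psiInv]
  have : ∀ lam : {l : ℝ // 0 < l ∧ ENNReal.ofReal l < b},
      ((∞ : ℝ≥0∞) + ENNReal.ofReal (ψ lam)) / ENNReal.ofReal (lam : ℝ) = ∞ := by
    intro lam
    simp [ENNReal.top_div_of_ne_top]
  simp only [this, iInf_const]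

lemma sum_psiInv_le {n : ℕ} (hn : 0 < n) (hb : 0 < b) (y : Fin n → ℝ≥0∞) :
    ∑ i, psiInv b ψ (y i) ≤ n * psiInv b ψ ((∑ i, y i) / n) := by
  haveI := psiInv_index_nonempty hb
  have hn0 : (n : ℝ≥0∞) ≠ 0 := by
    simp [hn.ne']
  have hnt : (n : ℝ≥0∞) ≠ ∞ := ENNReal.natCast_ne_top n
  rw [psiInv, ENNReal.mul_iInf_of_ne hn0 hnt]
  refine le_iInf fun lam => ?_
  set c := ENNReal.ofReal (ψ lam) with hc
  set l := ENNReal.ofReal (lam : ℝ) with hl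
  calc ∑ i, psiInv b ψ (y i) ≤ ∑ i, (y i + c) / l := by
        refine Finset.sum_le_sum fun i _ => ?_
        exact iInf_le (fun lam' : {l : ℝ // 0 < l ∧ ENNReal.ofReal l < b} =>
          (y i + ENNReal.ofReal (ψ lam')) / ENNReal.ofReal (lam' : ℝ)) lam
    _ = ((∑ i, y i) + n * c) / l := by
        simp only [div_eq_mul_inv, ← Finset.sum_mul, Finset.sum_add_distrib,
          Finset.sum_const, Finset.card_univ, Fintype.card_fin, nsmul_eq_mul]
    _ = ↑n * (((∑ i, y i) / ↑n + c) / l) := by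
        rw [← mul_div_assoc, mul_add, ENNReal.mul_div_cancel hn0 hnt]

end psiInvLemmas


section aux
variable {X Y : Type*} [MeasurableSpace X] [MeasurableSpace Y]

lemma map_fst_withDensity (δ₁ : Measure X) (δ₂ : Measure Y)
    [SigmaFinite δ₁] [SigmaFinite δ₂] {f : X × Y → ℝ≥0∞} (hf : Measurable f) :
    ((δ₁.prod δ₂).withDensity f).map Prod.fst
      = δ₁.withDensity fun x => ∫⁻ y, f (x, y) ∂δ₂ := by
  ext s hs
  rw [Measure.map_apply measurable_fst hs, withDensity_apply _ (measurable_fst hs),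
    withDensity_apply _ hs]
  have hpre : (Prod.fst ⁻¹' s : Set (X × Y)) = s ×ˢ Set.univ := by ext z; simp
  rw [hpre, ← Measure.restrict_prod_eq_prod_univ, lintegral_prod _ hf.aemeasurable]

/-- Jensen helper: if `exp (-h)` coincides a.e. with `toReal ∘ G` and `∫⁻ G ≤ 1`,
then `0 ≤ ∫ h`. -/
lemma nonneg_integral_of_exp_neg {μ : Measure X} [IsProbabilityMeasure μ]
    {h : X → ℝ} (hint : Integrable h μ) {G : X → ℝ≥0∞} (hG : AEMeasurable G μ)
    (hle : ∫⁻ x, G x ∂μ ≤ 1)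
    (heq : (fun x => Real.exp (-h x)) =ᵐ[μ] fun x => (G x).toReal) :
    0 ≤ ∫ x, h x ∂μ := by
  have hGfin : ∫⁻ x, G x ∂μ ≠ ∞ := (lt_of_le_of_lt hle ENNReal.one_lt_top).ne
  have hint_exp : Integrable (fun x => Real.exp (-h x)) μ :=
    (integrable_toReal_of_lintegral_ne_top hG hGfin).congr heq.symm
  have hJ : Real.exp (∫ x, -h x ∂μ) ≤ ∫ x, Real.exp (-h x) ∂μ := by
    have := convexOn_exp.map_integral_le (Real.continuous_exp.continuousOn)
      isClosed_univ (Filter.Eventually.of_forall fun x => Set.mem_univ _) hint.neg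
      (by exact hint_exp)
    simpa using this
  have h2 : ∫ x, Real.exp (-h x) ∂μ ≤ 1 := by
    rw [integral_congr_ae heq, integral_toReal hG (ae_lt_top' hG hGfin)]
    have := ENNReal.toReal_mono ENNReal.one_ne_top hle
    simpa using this
  have h3 : ∫ x, -h x ∂μ ≤ 0 := by
    have := hJ.trans h2
    rwa [← Real.exp_zero, Real.exp_le_exp] at this
  rw [integral_neg] at h3
  linarith

/-- Gibbs' inequality. -/
lemma integral_llr_nonneg {ρ σ : Measure X} [IsProbabilityMeasure ρ] [IsProbabilityMeasure σ]
    (hac : ρ ≪ σ) (hint : Integrable (llr ρ σ) ρ) : 0 ≤ ∫ x, llr ρ σ x ∂ρ :=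
  nonneg_integral_of_exp_neg hint (Measure.measurable_rnDeriv σ ρ).aemeasurable
    (le_trans Measure.lintegral_rnDeriv_le (by simp)) (exp_neg_llr hac)

end aux


section aux2
variable {X Y : Type*} [MeasurableSpace X] [MeasurableSpace Y]

private lemma phi_convex : ConvexOn ℝ (Set.Ici (0:ℝ)) fun t => max (t * Real.log t) 0 := by
  have := Real.convexOn_mul_log.sup (convexOn_const (0:ℝ) (convex_Ici 0))
  simpa [Pi.sup_def, max_comm] using this

private lemma phi_cont : ContinuousOn (fun t => max (t * Real.log t) 0) (Set.Ici (0:ℝ)) :=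
  (Real.continuous_mul_log.max continuous_const).continuousOn

private lemma phi_le_abs {t : ℝ} (ht : 0 ≤ t) :
    max (t * Real.log t) 0 ≤ ‖Real.log t‖ * t := by
  refine max_le ?_ (by positivity)
  calc t * Real.log t ≤ |t * Real.log t| := le_abs_self _
    _ = ‖Real.log t‖ * t := by
        rw [abs_mul, abs_of_nonneg ht, Real.norm_eq_abs]; ring

private lemma abs_le_phi {t : ℝ} (ht : 0 ≤ t) :
    t * |Real.log t| ≤ max (t * Real.log t) 0 + 1 := by
  rcases le_or_gt 1 t with h1 | h1
  · have hl : 0 ≤ Real.log t := Real.log_nonneg h1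
    rw [abs_of_nonneg hl]
    have : t * Real.log t ≤ max (t * Real.log t) 0 := le_max_left _ _
    linarith
  · rcases eq_or_lt_of_le ht with rfl | ht0
    · simp
    · have hl : Real.log t < 0 := Real.log_neg ht0 h1
      rw [abs_of_neg hl]
      have hinv : Real.log t⁻¹ ≤ t⁻¹ - 1 := Real.log_le_sub_one_of_pos (by positivity)
      rw [Real.log_inv] at hinv
      have h2 : t * -Real.log t ≤ t * (t⁻¹ - 1) :=
        mul_le_mul_of_nonneg_left (by linarith) ht
      have h3 : t * (t⁻¹ - 1) = 1 - t := by
        field_simp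
      have h4 : (0:ℝ) ≤ max (t * Real.log t) 0 := le_max_right _ _
      nlinarith

lemma integrable_llr_map_fst {δ₁ : Measure X} {δ₂ : Measure Y}
    [IsProbabilityMeasure δ₁] [IsProbabilityMeasure δ₂]
    {ρ : Measure (X × Y)} [IsProbabilityMeasure ρ]
    (hac : ρ ≪ δ₁.prod δ₂) (hint : Integrable (llr ρ (δ₁.prod δ₂)) ρ) :
    Integrable (llr (ρ.map Prod.fst) δ₁) (ρ.map Prod.fst) := by
  set φ : ℝ → ℝ := fun t => max (t * Real.log t) 0 with hφdef
  set σ := δ₁.prod δ₂ with hσdef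
  set f := ρ.rnDeriv σ with hfdef
  have hfmeas : Measurable f := Measure.measurable_rnDeriv ρ σ
  set F : X × Y → ℝ := fun z => (f z).toReal with hFdef
  have hFmeas : Measurable F := hfmeas.ennreal_toReal
  set g : X → ℝ≥0∞ := fun x => ∫⁻ y, f (x, y) ∂δ₂ with hgdef
  have hgmeas : Measurable g := hfmeas.lintegral_prod_right'
  have hρd : σ.withDensity f = ρ := Measure.withDensity_rnDeriv_eq ρ σ hac
  have hρ1 : ρ.map Prod.fst = δ₁.withDensity g := by
    rw [← hρd, map_fst_withDensity δ₁ δ₂ hfmeas]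
  have hac1 : ρ.map Prod.fst ≪ δ₁ := hρ1 ▸ withDensity_absolutelyContinuous δ₁ g
  have hrn1 : (ρ.map Prod.fst).rnDeriv δ₁ =ᵐ[δ₁] g := by
    rw [hρ1]; exact Measure.rnDeriv_withDensity δ₁ hgmeas
  have hllr_eq : (fun x => Real.log (g x).toReal) =ᵐ[ρ.map Prod.fst]
      llr (ρ.map Prod.fst) δ₁ := by
    filter_upwards [hac1.ae_le hrn1] with x hx
    simp only [llr_def]
    rw [hx]
  -- the key finiteness A
  have hφFmeas : Measurable fun z => ENNReal.ofReal (φ (F z)) :=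
    ((Real.continuous_mul_log.max continuous_const).measurable.comp hFmeas).ennreal_ofReal
  have hintnorm : ∫⁻ z, ENNReal.ofReal ‖llr ρ σ z‖ ∂ρ < ∞ :=
    (hasFiniteIntegral_iff_norm (llr ρ σ)).mp hint.2
  have hA : ∫⁻ z, ENNReal.ofReal (φ (F z)) ∂σ < ∞ := by
    have hbd : ∀ᵐ z ∂σ, ENNReal.ofReal (φ (F z))
        ≤ (f * fun z => ENNReal.ofReal ‖Real.log (F z)‖) z := by
      filter_upwards [Measure.rnDeriv_lt_top ρ σ] with z hz
      calc ENNReal.ofReal (φ (F z)) ≤ ENNReal.ofReal (‖Real.log (F z)‖ * F z) :=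
            ENNReal.ofReal_le_ofReal (phi_le_abs ENNReal.toReal_nonneg)
        _ = ENNReal.ofReal ‖Real.log (F z)‖ * ENNReal.ofReal (F z) :=
            ENNReal.ofReal_mul (norm_nonneg _)
        _ = ENNReal.ofReal ‖Real.log (F z)‖ * f z := by
            rw [hFdef, ENNReal.ofReal_toReal hz.ne]
        _ = (f * fun z => ENNReal.ofReal ‖Real.log (F z)‖) z := by
            simp [mul_comm]
    calc ∫⁻ z, ENNReal.ofReal (φ (F z)) ∂σ
        ≤ ∫⁻ z, (f * fun z => ENNReal.ofReal ‖Real.log (F z)‖) z ∂σ := lintegral_mono_ae hbd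
      _ = ∫⁻ z, ENNReal.ofReal ‖Real.log (F z)‖ ∂(σ.withDensity f) :=
          (lintegral_withDensity_eq_lintegral_mul σ hfmeas
            ((Real.measurable_log.comp hFmeas).norm.ennreal_ofReal)).symm
      _ = ∫⁻ z, ENNReal.ofReal ‖llr ρ σ z‖ ∂ρ := by rw [hρd]; rfl
      _ < ∞ := hintnorm
  -- a.e. facts in x
  have hgint : ∫⁻ x, g x ∂δ₁ ≠ ∞ := by
    rw [hgdef, ← lintegral_prod _ hfmeas.aemeasurable, ← hσdef,
      Measure.lintegral_rnDeriv hac]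
    exact measure_ne_top ρ _
  have h2 : ∀ᵐ x ∂δ₁, g x < ∞ := ae_lt_top hgmeas hgint
  have h3 : ∀ᵐ x ∂δ₁, ∀ᵐ y ∂δ₂, f (x, y) < ∞ :=
    Measure.ae_ae_of_ae_prod (Measure.rnDeriv_lt_top ρ σ)
  have hAiter : ∫⁻ x, ∫⁻ y, ENNReal.ofReal (φ (F (x, y))) ∂δ₂ ∂δ₁ < ∞ := by
    rw [← lintegral_prod _ hφFmeas.aemeasurable]; exact hA
  have h4 : ∀ᵐ x ∂δ₁, ∫⁻ y, ENNReal.ofReal (φ (F (x, y))) ∂δ₂ < ∞ :=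
    ae_lt_top hφFmeas.lintegral_prod_right' hAiter.ne
  -- Jensen
  have hjen : ∀ᵐ x ∂δ₁, ENNReal.ofReal (φ (g x).toReal)
      ≤ ∫⁻ y, ENNReal.ofReal (φ (F (x, y))) ∂δ₂ := by
    filter_upwards [h2, h3, h4] with x hx2 hx3 hx4
    have hfx : AEMeasurable (fun y => f (x, y)) δ₂ :=
      (hfmeas.comp measurable_prodMk_left).aemeasurable
    have hFxint : Integrable (fun y => F (x, y)) δ₂ :=
      integrable_toReal_of_lintegral_ne_top hfx hx2.ne
    have hφFxmeas : Measurable fun y => φ (F (x, y)) :=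
      (Real.continuous_mul_log.max continuous_const).measurable.comp
        (hFmeas.comp measurable_prodMk_left)
    have hφFx_int : Integrable (fun y => φ (F (x, y))) δ₂ := by
      refine ⟨hφFxmeas.aestronglyMeasurable, ?_⟩
      rw [hasFiniteIntegral_iff_norm]
      have : ∀ y, ENNReal.ofReal ‖φ (F (x, y))‖ = ENNReal.ofReal (φ (F (x, y))) := by
        intro y
        rw [Real.norm_eq_abs, abs_of_nonneg (le_max_right _ _)]
      simpa only [this] using hx4
    have hgt : (g x).toReal = ∫ y, F (x, y) ∂δ₂ := by
      rw [integral_toReal hfx hx3]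
    have hjensen : φ ((g x).toReal) ≤ ∫ y, φ (F (x, y)) ∂δ₂ := by
      rw [hgt]
      exact phi_convex.map_integral_le phi_cont isClosed_Ici
        (Filter.Eventually.of_forall fun y => ENNReal.toReal_nonneg) hFxint
        (by exact hφFx_int)
    calc ENNReal.ofReal (φ (g x).toReal) ≤ ENNReal.ofReal (∫ y, φ (F (x, y)) ∂δ₂) :=
          ENNReal.ofReal_le_ofReal hjensen
      _ = ∫⁻ y, ENNReal.ofReal (φ (F (x, y))) ∂δ₂ :=
          ofReal_integral_eq_lintegral_ofReal hφFx_int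
            (Filter.Eventually.of_forall fun y => le_max_right _ _)
  -- conclude
  have hlogmeas : Measurable fun x => Real.log (g x).toReal :=
    Real.measurable_log.comp hgmeas.ennreal_toReal
  have hnormmeas : Measurable fun x => ENNReal.ofReal ‖Real.log (g x).toReal‖ :=
    hlogmeas.norm.ennreal_ofReal
  have hmain : Integrable (fun x => Real.log (g x).toReal) (ρ.map Prod.fst) := by
    refine ⟨hlogmeas.aestronglyMeasurable, ?_⟩
    rw [hasFiniteIntegral_iff_norm, hρ1,
      lintegral_withDensity_eq_lintegral_mul δ₁ hgmeas hnormmeas]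
    have hbd : ∀ᵐ x ∂δ₁, (g * fun x => ENNReal.ofReal ‖Real.log (g x).toReal‖) x
        ≤ (∫⁻ y, ENNReal.ofReal (φ (F (x, y))) ∂δ₂) + 1 := by
      filter_upwards [h2, hjen] with x hx2 hjx
      have : (g * fun x => ENNReal.ofReal ‖Real.log (g x).toReal‖) x
          = ENNReal.ofReal ((g x).toReal * |Real.log (g x).toReal|) := by
        simp only [Pi.mul_apply]
        rw [ENNReal.ofReal_mul ENNReal.toReal_nonneg, ENNReal.ofReal_toReal hx2.ne,
          Real.norm_eq_abs]
      rw [this]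
      calc ENNReal.ofReal ((g x).toReal * |Real.log (g x).toReal|)
          ≤ ENNReal.ofReal (φ (g x).toReal + 1) :=
            ENNReal.ofReal_le_ofReal (abs_le_phi ENNReal.toReal_nonneg)
        _ ≤ ENNReal.ofReal (φ (g x).toReal) + ENNReal.ofReal 1 := ENNReal.ofReal_add_le
        _ ≤ (∫⁻ y, ENNReal.ofReal (φ (F (x, y))) ∂δ₂) + 1 := by
            simpa using add_le_add_right hjx 1
    calc ∫⁻ x, (g * fun x => ENNReal.ofReal ‖Real.log (g x).toReal‖) x ∂δ₁
        ≤ ∫⁻ x, ((∫⁻ y, ENNReal.ofReal (φ (F (x, y))) ∂δ₂) + 1) ∂δ₁ := lintegral_mono_ae hbd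
      _ = (∫⁻ x, ∫⁻ y, ENNReal.ofReal (φ (F (x, y))) ∂δ₂ ∂δ₁) + 1 := by
          rw [lintegral_add_right _ measurable_const]; simp
      _ < ∞ := by
          exact ENNReal.add_lt_top.mpr ⟨hAiter, ENNReal.one_lt_top⟩
  exact hmain.congr hllr_eq

end aux2




section equiv
variable {Z W : Type*} [MeasurableSpace Z] [MeasurableSpace W]

lemma map_map_symm (e : Z ≃ᵐ W) (κ : Measure Z) : (κ.map e).map e.symm = κ := by
  rw [Measure.map_map e.symm.measurable e.measurable]
  have : ⇑e.symm ∘ ⇑e = id := by funext z; simp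
  rw [this, Measure.map_id]

lemma ac_map_equiv_iff (e : Z ≃ᵐ W) {μ ν : Measure Z} : μ.map e ≪ ν.map e ↔ μ ≪ ν := by
  constructor
  · intro h
    have := h.map e.symm.measurable
    rwa [map_map_symm, map_map_symm] at this
  · exact fun h => h.map e.measurable

lemma llr_map_equiv (e : Z ≃ᵐ W) {μ ν : Measure Z} [SigmaFinite μ] [SigmaFinite ν]
    (hac : μ ≪ ν) :
    (fun x => llr (μ.map e) (ν.map e) (e x)) =ᵐ[μ] llr μ ν := by
  have h := e.measurableEmbedding.rnDeriv_map μ ν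
  filter_upwards [hac.ae_le h] with x hx
  simp only [llr_def]
  rw [hx]

lemma integrable_llr_map_equiv (e : Z ≃ᵐ W) {μ ν : Measure Z} [IsProbabilityMeasure μ]
    [IsProbabilityMeasure ν] (hac : μ ≪ ν) :
    Integrable (llr (μ.map e) (ν.map e)) (μ.map e) ↔ Integrable (llr μ ν) μ := by
  rw [integrable_map_measure (stronglyMeasurable_llr _ _).aestronglyMeasurable
    e.measurable.aemeasurable]
  exact integrable_congr (llr_map_equiv e hac)

lemma integral_llr_map_equiv (e : Z ≃ᵐ W) {μ ν : Measure Z} [IsProbabilityMeasure μ]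
    [IsProbabilityMeasure ν] (hac : μ ≪ ν) :
    ∫ y, llr (μ.map e) (ν.map e) y ∂(μ.map e) = ∫ x, llr μ ν x ∂μ := by
  rw [integral_map e.measurable.aemeasurable (stronglyMeasurable_llr _ _).aestronglyMeasurable]
  exact integral_congr_ae (llr_map_equiv e hac)

lemma klDiv_map_equiv (e : Z ≃ᵐ W) (μ ν : Measure Z) [IsProbabilityMeasure μ]
    [IsProbabilityMeasure ν] :
    klDiv (μ.map e) (ν.map e) = klDiv μ ν := by
  by_cases hac : μ ≪ ν
  · by_cases hint : Integrable (llr μ ν) μ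
    · rw [klDiv, klDiv,
        if_pos ⟨hac.map e.measurable, (integrable_llr_map_equiv e hac).mpr hint⟩,
        if_pos ⟨hac, hint⟩, integral_llr_map_equiv e hac]
    · rw [klDiv, klDiv, if_neg, if_neg]
      · rintro ⟨-, h⟩; exact hint h
      · rintro ⟨-, h⟩; exact hint ((integrable_llr_map_equiv e hac).mp h)
  · rw [klDiv, klDiv, if_neg, if_neg]
    · rintro ⟨h, -⟩; exact hac h
    · rintro ⟨h, -⟩; exact hac ((ac_map_equiv_iff e).mp h)

end equiv

section assoc
variable {A C D : Type*} [MeasurableSpace A] [MeasurableSpace C] [MeasurableSpace D]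

lemma map_prodAssoc_symm (μa : Measure A) (μc : Measure C) (μd : Measure D)
    [SFinite μa] [SFinite μc] [SFinite μd] :
    (μa.prod (μc.prod μd)).map (MeasurableEquiv.prodAssoc
      : (A × C) × D ≃ᵐ A × C × D).symm = (μa.prod μc).prod μd := by
  have h1 : ((μa.prod μc).prod μd).map (MeasurableEquiv.prodAssoc : (A × C) × D ≃ᵐ A × C × D)
      = μa.prod (μc.prod μd) := Measure.prodAssoc_prod
  rw [← h1, map_map_symm]

end assoc

section core
variable {B G1 G2 : Type*} [MeasurableSpace B] [MeasurableSpace G1] [MeasurableSpace G2]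

lemma klDiv_core (νW : Measure B) (ν1 : Measure G1) (ν2 : Measure G2)
    [IsProbabilityMeasure νW] [IsProbabilityMeasure ν1] [IsProbabilityMeasure ν2]
    (μ : Measure (B × G1 × G2)) [IsProbabilityMeasure μ]
    (hac : μ ≪ νW.prod (ν1.prod ν2))
    (hint : Integrable (llr μ (νW.prod (ν1.prod ν2))) μ)
    (hfst : μ.map Prod.fst = νW) :
    klDiv (μ.map fun p => (p.1, p.2.1)) (νW.prod ν1)
        + klDiv (μ.map fun p => (p.1, p.2.2)) (νW.prod ν2)
      ≤ klDiv μ (νW.prod (ν1.prod ν2))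
    ∧ ((μ.map fun p => (p.1, p.2.2)) ≪ νW.prod ν2
       ∧ Integrable (llr (μ.map fun p => (p.1, p.2.2)) (νW.prod ν2))
           (μ.map fun p => (p.1, p.2.2))) := by
  set ν := νW.prod (ν1.prod ν2) with hν
  set π₁ : B × G1 × G2 → B × G1 := fun p => (p.1, p.2.1) with hπ₁def
  set π₂ : B × G1 × G2 → B × G2 := fun p => (p.1, p.2.2) with hπ₂def
  have hπ₁ : Measurable π₁ := measurable_fst.prodMk (measurable_fst.comp measurable_snd)
  have hπ₂ : Measurable π₂ := measurable_fst.prodMk (measurable_snd.comp measurable_snd)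
  haveI : IsProbabilityMeasure (μ.map π₁) := Measure.isProbabilityMeasure_map hπ₁.aemeasurable
  haveI : IsProbabilityMeasure (μ.map π₂) := Measure.isProbabilityMeasure_map hπ₂.aemeasurable
  -- the two "associativity" equivalences
  set ea : B × G1 × G2 ≃ᵐ (B × G1) × G2 :=
    (MeasurableEquiv.prodAssoc : (B × G1) × G2 ≃ᵐ B × G1 × G2).symm with headef
  set ec : B × G1 × G2 ≃ᵐ B × G2 × G1 :=
    (MeasurableEquiv.refl B).prodCongr MeasurableEquiv.prodComm with hecdef
  set eb : B × G1 × G2 ≃ᵐ (B × G2) × G1 :=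
    ec.trans (MeasurableEquiv.prodAssoc : (B × G2) × G1 ≃ᵐ B × G2 × G1).symm with hebdef
  have hea : ν.map ea = (νW.prod ν1).prod ν2 := map_prodAssoc_symm νW ν1 ν2
  have hec : ν.map ec = νW.prod (ν2.prod ν1) := by
    have hcoe : ⇑ec = Prod.map id (Prod.swap : G1 × G2 → G2 × G1) := rfl
    rw [hcoe, ← Measure.map_prod_map _ _ measurable_id measurable_swap,
      Measure.map_id, Measure.prod_swap]
  have heb : ν.map eb = (νW.prod ν2).prod ν1 := by
    have hcoe : ⇑eb = (⇑(MeasurableEquiv.prodAssoc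
        : (B × G2) × G1 ≃ᵐ B × G2 × G1).symm) ∘ ⇑ec := rfl
    rw [hcoe, ← Measure.map_map (MeasurableEquiv.prodAssoc).symm.measurable ec.measurable,
      hec, map_prodAssoc_symm]
  -- transported AC and integrability, then marginal integrability
  have hacea : μ.map ea ≪ (νW.prod ν1).prod ν2 := hea ▸ hac.map ea.measurable
  have haceb : μ.map eb ≪ (νW.prod ν2).prod ν1 := heb ▸ hac.map eb.measurable
  haveI : IsProbabilityMeasure (μ.map ea) := Measure.isProbabilityMeasure_map ea.measurable.aemeasurable
  haveI : IsProbabilityMeasure (μ.map eb) := Measure.isProbabilityMeasure_map eb.measurable.aemeasurable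
  have hintea : Integrable (llr (μ.map ea) ((νW.prod ν1).prod ν2)) (μ.map ea) := by
    have := (integrable_llr_map_equiv ea hac).mpr hint
    rwa [hea] at this
  have hinteb : Integrable (llr (μ.map eb) ((νW.prod ν2).prod ν1)) (μ.map eb) := by
    have := (integrable_llr_map_equiv eb hac).mpr hint
    rwa [heb] at this
  have hμ₁eq : (μ.map ea).map Prod.fst = μ.map π₁ := by
    rw [Measure.map_map measurable_fst ea.measurable]; rfl
  have hμ₂eq : (μ.map eb).map Prod.fst = μ.map π₂ := by
    rw [Measure.map_map measurable_fst eb.measurable]; rfl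
  have hint₁ : Integrable (llr (μ.map π₁) (νW.prod ν1)) (μ.map π₁) := by
    have := integrable_llr_map_fst hacea hintea
    rwa [hμ₁eq] at this
  have hint₂ : Integrable (llr (μ.map π₂) (νW.prod ν2)) (μ.map π₂) := by
    have := integrable_llr_map_fst haceb hinteb
    rwa [hμ₂eq] at this
  have hfstprod₁ : ((νW.prod ν1).prod ν2).map Prod.fst = νW.prod ν1 := by
    have := Measure.fst_prod (μ := νW.prod ν1) (ν := ν2)
    simpa [Measure.fst] using this
  have hfstprod₂ : ((νW.prod ν2).prod ν1).map Prod.fst = νW.prod ν2 := by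
    have := Measure.fst_prod (μ := νW.prod ν2) (ν := ν1)
    simpa [Measure.fst] using this
  have hac₁ : μ.map π₁ ≪ νW.prod ν1 := by
    have := hacea.map measurable_fst
    rwa [hμ₁eq, hfstprod₁] at this
  have hac₂ : μ.map π₂ ≪ νW.prod ν2 := by
    have := haceb.map measurable_fst
    rwa [hμ₂eq, hfstprod₂] at this
  -- densities
  set f₁ := (μ.map π₁).rnDeriv (νW.prod ν1) with hf₁def
  set f₂ := (μ.map π₂).rnDeriv (νW.prod ν2) with hf₂def
  have hf₁ : Measurable f₁ := Measure.measurable_rnDeriv _ _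
  have hf₂ : Measurable f₂ := Measure.measurable_rnDeriv _ _
  have hmfst₁ : (μ.map π₁).map Prod.fst = νW := by
    rw [Measure.map_map measurable_fst hπ₁]; exact hfst
  have hmfst₂ : (μ.map π₂).map Prod.fst = νW := by
    rw [Measure.map_map measurable_fst hπ₂]; exact hfst
  have hg₁ : (fun w => ∫⁻ a, f₁ (w, a) ∂ν1) =ᵐ[νW] 1 := by
    have h1 : νW.withDensity (fun w => ∫⁻ a, f₁ (w, a) ∂ν1) = νW.withDensity 1 := by
      rw [withDensity_one, ← map_fst_withDensity νW ν1 hf₁,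
        Measure.withDensity_rnDeriv_eq _ _ hac₁, hmfst₁]
    exact (withDensity_eq_iff_of_sigmaFinite hf₁.lintegral_prod_right'.aemeasurable
      aemeasurable_const).mp h1
  have hg₂ : (fun w => ∫⁻ a, f₂ (w, a) ∂ν2) =ᵐ[νW] 1 := by
    have h1 : νW.withDensity (fun w => ∫⁻ a, f₂ (w, a) ∂ν2) = νW.withDensity 1 := by
      rw [withDensity_one, ← map_fst_withDensity νW ν2 hf₂,
        Measure.withDensity_rnDeriv_eq _ _ hac₂, hmfst₂]
    exact (withDensity_eq_iff_of_sigmaFinite hf₂.lintegral_prod_right'.aemeasurable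
      aemeasurable_const).mp h1
  -- total mass of the product density
  have hF : Measurable fun z : B × G1 × G2 => f₁ (π₁ z) * f₂ (π₂ z) :=
    (hf₁.comp hπ₁).mul (hf₂.comp hπ₂)
  have hIntF : ∫⁻ z, f₁ (π₁ z) * f₂ (π₂ z) ∂ν = 1 := by
    rw [hν, lintegral_prod _ hF.aemeasurable]
    have hae : ∀ᵐ w ∂νW,
        ∫⁻ q : G1 × G2, f₁ (π₁ (w, q)) * f₂ (π₂ (w, q)) ∂(ν1.prod ν2) = 1 := by
      filter_upwards [hg₁, hg₂] with w hw1 hw2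
      have : ∀ q : G1 × G2, f₁ (π₁ (w, q)) * f₂ (π₂ (w, q))
          = (fun a => f₁ (w, a)) q.1 * (fun a => f₂ (w, a)) q.2 := fun q => rfl
      simp only [this]
      calc ∫⁻ q : G1 × G2, (fun a => f₁ (w, a)) q.1 * (fun a => f₂ (w, a)) q.2 ∂ν1.prod ν2
          = (∫⁻ a, f₁ (w, a) ∂ν1) * ∫⁻ a, f₂ (w, a) ∂ν2 :=
            lintegral_prod_mul (hf₁.comp measurable_prodMk_left).aemeasurable
              (hf₂.comp measurable_prodMk_left).aemeasurable
        _ = 1 := by rw [hw1, hw2]; simp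
    rw [lintegral_congr_ae hae, lintegral_one, measure_univ]
  -- the ≤ 1 bound for Jensen
  have hlint : ∫⁻ z, (ν.rnDeriv μ z) * (f₁ (π₁ z) * f₂ (π₂ z)) ∂μ ≤ 1 := by
    have hwd := lintegral_withDensity_eq_lintegral_mul μ
      (Measure.measurable_rnDeriv ν μ) hF
    calc ∫⁻ z, (ν.rnDeriv μ z) * (f₁ (π₁ z) * f₂ (π₂ z)) ∂μ
        = ∫⁻ z, f₁ (π₁ z) * f₂ (π₂ z) ∂(μ.withDensity (ν.rnDeriv μ)) := by
          rw [hwd]; rfl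
      _ ≤ ∫⁻ z, f₁ (π₁ z) * f₂ (π₂ z) ∂ν :=
          lintegral_mono' (Measure.withDensity_rnDeriv_le ν μ) le_rfl
      _ = 1 := hIntF
  -- positivity facts
  have hpos₁ : ∀ᵐ z ∂μ, 0 < f₁ (π₁ z) ∧ f₁ (π₁ z) < ∞ := by
    have hm : MeasurableSet {u : B × G1 | 0 < f₁ u ∧ f₁ u < ∞} :=
      (hf₁ measurableSet_Ioi).inter (hf₁ measurableSet_Iio)
    have h := (Measure.rnDeriv_pos hac₁).and
      (hac₁.ae_le (Measure.rnDeriv_lt_top (μ.map π₁) (νW.prod ν1)))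
    exact (ae_map_iff hπ₁.aemeasurable hm).mp h
  have hpos₂ : ∀ᵐ z ∂μ, 0 < f₂ (π₂ z) ∧ f₂ (π₂ z) < ∞ := by
    have hm : MeasurableSet {u : B × G2 | 0 < f₂ u ∧ f₂ u < ∞} :=
      (hf₂ measurableSet_Ioi).inter (hf₂ measurableSet_Iio)
    have h := (Measure.rnDeriv_pos hac₂).and
      (hac₂.ae_le (Measure.rnDeriv_lt_top (μ.map π₂) (νW.prod ν2)))
    exact (ae_map_iff hπ₂.aemeasurable hm).mp h
  -- integrability of pullbacks
  have hintc₁ : Integrable (fun z => llr (μ.map π₁) (νW.prod ν1) (π₁ z)) μ :=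
    (integrable_map_measure (stronglyMeasurable_llr _ _).aestronglyMeasurable
      hπ₁.aemeasurable).mp hint₁
  have hintc₂ : Integrable (fun z => llr (μ.map π₂) (νW.prod ν2) (π₂ z)) μ :=
    (integrable_map_measure (stronglyMeasurable_llr _ _).aestronglyMeasurable
      hπ₂.aemeasurable).mp hint₂
  set h : B × G1 × G2 → ℝ := fun z => llr μ ν z
    - llr (μ.map π₁) (νW.prod ν1) (π₁ z) - llr (μ.map π₂) (νW.prod ν2) (π₂ z) with hhdef
  have hinth : Integrable h μ := (hint.sub hintc₁).sub hintc₂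
  have heq : (fun z => Real.exp (-h z))
      =ᵐ[μ] fun z => ((ν.rnDeriv μ z) * (f₁ (π₁ z) * f₂ (π₂ z))).toReal := by
    filter_upwards [exp_neg_llr hac, hpos₁, hpos₂] with z he h1 h2
    have e1 : Real.exp (llr (μ.map π₁) (νW.prod ν1) (π₁ z)) = (f₁ (π₁ z)).toReal := by
      simp only [llr_def]
      exact Real.exp_log (ENNReal.toReal_pos h1.1.ne' h1.2.ne)
    have e2 : Real.exp (llr (μ.map π₂) (νW.prod ν2) (π₂ z)) = (f₂ (π₂ z)).toReal := by
      simp only [llr_def]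
      exact Real.exp_log (ENNReal.toReal_pos h2.1.ne' h2.2.ne)
    have hneg : -h z = -llr μ ν z + (llr (μ.map π₁) (νW.prod ν1) (π₁ z)
        + llr (μ.map π₂) (νW.prod ν2) (π₂ z)) := by
      simp only [hhdef]; ring
    rw [hneg, Real.exp_add, Real.exp_add, e1, e2, he, ENNReal.toReal_mul, ENNReal.toReal_mul]
  have hG : AEMeasurable (fun z => (ν.rnDeriv μ z) * (f₁ (π₁ z) * f₂ (π₂ z))) μ :=
    ((Measure.measurable_rnDeriv ν μ).mul hF).aemeasurable
  have h0int : 0 ≤ ∫ z, h z ∂μ := nonneg_integral_of_exp_neg hinth hG hlint heq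
  have hi₁ : ∫ z, llr (μ.map π₁) (νW.prod ν1) (π₁ z) ∂μ
      = ∫ u, llr (μ.map π₁) (νW.prod ν1) u ∂(μ.map π₁) :=
    (integral_map hπ₁.aemeasurable (stronglyMeasurable_llr _ _).aestronglyMeasurable).symm
  have hi₂ : ∫ z, llr (μ.map π₂) (νW.prod ν2) (π₂ z) ∂μ
      = ∫ u, llr (μ.map π₂) (νW.prod ν2) u ∂(μ.map π₂) :=
    (integral_map hπ₂.aemeasurable (stronglyMeasurable_llr _ _).aestronglyMeasurable).symm
  have hsplit : ∫ z, h z ∂μ = ∫ z, llr μ ν z ∂μ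
      - ∫ z, llr (μ.map π₁) (νW.prod ν1) (π₁ z) ∂μ
      - ∫ z, llr (μ.map π₂) (νW.prod ν2) (π₂ z) ∂μ := by
    have hint12 : Integrable (fun z => llr μ ν z
        - llr (Measure.map π₁ μ) (νW.prod ν1) (π₁ z)) μ := hint.sub hintc₁
    simp only [hhdef]
    rw [integral_sub hint12 hintc₂, integral_sub hint hintc₁]
  have hsum : ∫ u, llr (μ.map π₁) (νW.prod ν1) u ∂(μ.map π₁)
      + ∫ u, llr (μ.map π₂) (νW.prod ν2) u ∂(μ.map π₂) ≤ ∫ z, llr μ ν z ∂μ := by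
    rw [← hi₁, ← hi₂]
    rw [hsplit] at h0int
    linarith
  have hnn₁ : 0 ≤ ∫ u, llr (μ.map π₁) (νW.prod ν1) u ∂(μ.map π₁) :=
    integral_llr_nonneg hac₁ hint₁
  have hnn₂ : 0 ≤ ∫ u, llr (μ.map π₂) (νW.prod ν2) u ∂(μ.map π₂) :=
    integral_llr_nonneg hac₂ hint₂
  refine ⟨?_, hac₂, hint₂⟩
  rw [klDiv, klDiv, klDiv, if_pos ⟨hac₁, hint₁⟩, if_pos ⟨hac₂, hint₂⟩, if_pos ⟨hac, hint⟩,
    ← ENNReal.ofReal_add hnn₁ hnn₂]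
  exact ENNReal.ofReal_le_ofReal hsum

end core

section sumlemma

lemma iIndepFun_succ {Ω α : Type*} [MeasurableSpace Ω] [MeasurableSpace α] {P : Measure Ω}
    {n : ℕ} {Z : Fin (n + 1) → Ω → α}
    (h : iIndepFun Z P) :
    iIndepFun (fun i : Fin n => Z i.succ) P := by
  rw [iIndepFun_iff_measure_inter_preimage_eq_mul] at h ⊢
  intro S sets hsets
  classical
  have key := h (S.image Fin.succ) (sets := fun j => Fin.cases Set.univ sets j) ?_
  · have h1 : (⋂ j ∈ S.image Fin.succ, Z j ⁻¹' Fin.cases Set.univ sets j)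
        = ⋂ i ∈ S, Z i.succ ⁻¹' sets i := by
      ext ω
      simp only [Set.mem_iInter, Finset.mem_image]
      constructor
      · intro hm i hi
        have := hm i.succ ⟨i, hi, rfl⟩
        simpa using this
      · rintro hm j ⟨i, hi, rfl⟩
        simpa using hm i hi
    have h2 : ∏ j ∈ S.image Fin.succ, P (Z j ⁻¹' Fin.cases Set.univ sets j)
        = ∏ i ∈ S, P (Z i.succ ⁻¹' sets i) := by
      rw [Finset.prod_image fun a _ b _ hab => Fin.succ_injective n hab]
      exact Finset.prod_congr rfl fun i _ => by simp
    rw [h1, h2] at key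
    exact key
  · intro j hj
    rcases Finset.mem_image.mp hj with ⟨i, hi, rfl⟩
    simpa using hsets i hi

lemma indepFun_head_tail {Ω α : Type*} [MeasurableSpace Ω] [MeasurableSpace α]
    {P : Measure Ω} {n : ℕ} {Z : Fin (n + 1) → Ω → α}
    (hmeas : ∀ i, Measurable (Z i))
    (h : iIndepFun Z P) :
    IndepFun (Z 0) (fun ω (j : Fin n) => Z j.succ ω) P := by
  classical
  have hd : Disjoint ({0} : Finset (Fin (n + 1))) (Finset.univ.image Fin.succ) := by
    rw [Finset.disjoint_left]
    intro a ha hb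
    rw [Finset.mem_singleton] at ha
    rcases Finset.mem_image.mp hb with ⟨j, -, hj⟩
    exact Fin.succ_ne_zero j (hj.trans ha)
  have hfin := h.indepFun_finset {0} (Finset.univ.image Fin.succ) hd hmeas
  have := hfin.comp (_mγ := inferInstance) (_mγ' := MeasurableSpace.pi)
    (φ := fun v : ∀ _ : ({0} : Finset (Fin (n + 1))), α => v ⟨0, Finset.mem_singleton_self 0⟩)
    (ψ := fun v : ∀ _ : (Finset.univ.image Fin.succ : Finset (Fin (n + 1))), α =>
      fun j : Fin n => v ⟨j.succ, Finset.mem_image_of_mem _ (Finset.mem_univ j)⟩)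
    (measurable_pi_apply _) (measurable_pi_lambda _ fun j => measurable_pi_apply _)
  exact this

end sumlemma




lemma sum_mutualInfo_le {Ω α β : Type*} [MeasurableSpace Ω] [MeasurableSpace α]
    [MeasurableSpace β] (P : Measure Ω) [IsProbabilityMeasure P] (W : Ω → β)
    (hW : Measurable W) :
    ∀ (n : ℕ) (Z : Fin n → Ω → α), (∀ i, Measurable (Z i)) →
      iIndepFun Z P →
      ((P.map fun ω => (W ω, fun i => Z i ω)) ≪
        ((P.map W).prod (P.map fun ω i => Z i ω))) →
      Integrable (llr (P.map fun ω => (W ω, fun i => Z i ω))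
          ((P.map W).prod (P.map fun ω i => Z i ω)))
        (P.map fun ω => (W ω, fun i => Z i ω)) →
      ∑ i, mutualInfo P W (Z i) ≤ mutualInfo P W fun ω i => Z i ω
  | 0, Z, hZm, hZi, hac, hint => by simp
  | (n + 1), Z, hZm, hZi, hac, hint => by
    classical
    set S : Ω → Fin (n + 1) → α := fun ω i => Z i ω with hSdef
    set S' : Ω → Fin n → α := fun ω j => Z j.succ ω with hS'def
    have hSmeas : Measurable S := measurable_pi_lambda _ fun i => hZm i
    have hS'meas : Measurable S' := measurable_pi_lambda _ fun j => hZm j.succ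
    set E : (Fin (n + 1) → α) ≃ᵐ α × (Fin n → α) :=
      MeasurableEquiv.piFinSuccAbove (fun _ : Fin (n + 1) => α) 0 with hEdef
    set e : β × (Fin (n + 1) → α) ≃ᵐ β × α × (Fin n → α) :=
      (MeasurableEquiv.refl β).prodCongr E with hedef
    have hEapp : ∀ x : Fin (n + 1) → α, E x = (x 0, fun j => x j.succ) := by
      intro x
      have h1 : E x = (x 0, Fin.removeNth 0 x) := by
        simp [hEdef, MeasurableEquiv.piFinSuccAbove_apply]
      rw [h1]
      congr 1
    -- probability measure instances
    haveI : IsProbabilityMeasure (P.map W) := Measure.isProbabilityMeasure_map hW.aemeasurable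
    haveI : IsProbabilityMeasure (P.map S) := Measure.isProbabilityMeasure_map hSmeas.aemeasurable
    haveI : IsProbabilityMeasure (P.map S') := Measure.isProbabilityMeasure_map hS'meas.aemeasurable
    haveI : IsProbabilityMeasure (P.map (Z 0)) := Measure.isProbabilityMeasure_map (hZm 0).aemeasurable
    have hpairmeas : Measurable fun ω => (W ω, S ω) := hW.prodMk hSmeas
    have hcoremeas : Measurable fun ω => (W ω, (Z 0 ω, S' ω)) :=
      hW.prodMk ((hZm 0).prodMk hS'meas)
    haveI : IsProbabilityMeasure (P.map fun ω => (W ω, S ω)) :=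
      Measure.isProbabilityMeasure_map hpairmeas.aemeasurable
    haveI : IsProbabilityMeasure (P.map fun ω => (W ω, (Z 0 ω, S' ω))) :=
      Measure.isProbabilityMeasure_map hcoremeas.aemeasurable
    -- transport along e
    have hμcore : (P.map fun ω => (W ω, S ω)).map e = P.map fun ω => (W ω, (Z 0 ω, S' ω)) := by
      have hfuneq : ⇑e ∘ (fun ω => (W ω, S ω)) = fun ω => (W ω, (Z 0 ω, S' ω)) :=
        funext fun ω => by
          show (W ω, E (S ω)) = (W ω, (Z 0 ω, S' ω))
          rw [hEapp]
      rw [Measure.map_map e.measurable hpairmeas, hfuneq]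
    have hmapE : (P.map S).map E = (P.map (Z 0)).prod (P.map S') := by
      rw [Measure.map_map E.measurable hSmeas]
      have hcomp : ⇑E ∘ S = fun ω => (Z 0 ω, S' ω) := funext fun ω => hEapp (S ω)
      rw [hcomp]
      exact (indepFun_iff_map_prod_eq_prod_map_map (hZm 0).aemeasurable
        hS'meas.aemeasurable).mp (indepFun_head_tail hZm hZi)
    have hνcore : ((P.map W).prod (P.map S)).map e
        = (P.map W).prod ((P.map (Z 0)).prod (P.map S')) := by
      have hcoe : ⇑e = Prod.map id ⇑E := rfl
      rw [hcoe, ← Measure.map_prod_map _ _ measurable_id E.measurable, Measure.map_id, hmapE]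
    have hacc : (P.map fun ω => (W ω, (Z 0 ω, S' ω)))
        ≪ (P.map W).prod ((P.map (Z 0)).prod (P.map S')) := by
      rw [← hμcore, ← hνcore]
      exact hac.map e.measurable
    have hintc : Integrable
        (llr (P.map fun ω => (W ω, (Z 0 ω, S' ω)))
          ((P.map W).prod ((P.map (Z 0)).prod (P.map S'))))
        (P.map fun ω => (W ω, (Z 0 ω, S' ω))) := by
      have := (integrable_llr_map_equiv e hac).mpr hint
      rwa [hμcore, hνcore] at this
    have hπ₁m : Measurable fun p : β × α × (Fin n → α) => (p.1, p.2.1) :=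
      measurable_fst.prodMk (measurable_fst.comp measurable_snd)
    have hπ₂m : Measurable fun p : β × α × (Fin n → α) => (p.1, p.2.2) :=
      measurable_fst.prodMk (measurable_snd.comp measurable_snd)
    have hfstc : (P.map fun ω => (W ω, (Z 0 ω, S' ω))).map Prod.fst = P.map W := by
      rw [Measure.map_map measurable_fst hcoremeas]
      rfl
    obtain ⟨hineq, hac₂, hint₂⟩ := klDiv_core (P.map W) (P.map (Z 0)) (P.map S')
      (P.map fun ω => (W ω, (Z 0 ω, S' ω))) hacc hintc hfstc
    -- identify the two marginal maps
    have hm₁ : (P.map fun ω => (W ω, (Z 0 ω, S' ω))).map (fun p => (p.1, p.2.1))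
        = P.map fun ω => (W ω, Z 0 ω) := by
      rw [Measure.map_map hπ₁m hcoremeas]
      rfl
    have hm₂ : (P.map fun ω => (W ω, (Z 0 ω, S' ω))).map (fun p => (p.1, p.2.2))
        = P.map fun ω => (W ω, S' ω) := by
      rw [Measure.map_map hπ₂m hcoremeas]
      rfl
    rw [hm₁, hm₂] at hineq
    rw [hm₂] at hac₂ hint₂
    -- IH
    have hIH := sum_mutualInfo_le P W hW n (fun j => Z j.succ) (fun j => hZm j.succ)
      (iIndepFun_succ hZi) hac₂ hint₂
    -- final chain
    have hklmap : mutualInfo P W S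
        = klDiv (P.map fun ω => (W ω, (Z 0 ω, S' ω)))
            ((P.map W).prod ((P.map (Z 0)).prod (P.map S'))) := by
      rw [mutualInfo, ← hμcore, ← hνcore, klDiv_map_equiv]
    calc ∑ i : Fin (n + 1), mutualInfo P W (Z i)
        = mutualInfo P W (Z 0) + ∑ j : Fin n, mutualInfo P W (Z j.succ) :=
          Fin.sum_univ_succ _
      _ ≤ klDiv (P.map fun ω => (W ω, Z 0 ω)) ((P.map W).prod (P.map (Z 0)))
          + klDiv (P.map fun ω => (W ω, S' ω)) ((P.map W).prod (P.map S')) := by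
          refine add_le_add (le_of_eq ?_) ?_
          · rw [mutualInfo]
          · exact hIH
      _ ≤ klDiv (P.map fun ω => (W ω, (Z 0 ω, S' ω)))
            ((P.map W).prod ((P.map (Z 0)).prod (P.map S'))) := hineq
      _ = mutualInfo P W S := hklmap.symm

/-- **Aggregating per-sample mutual-information bounds into per-dataset bounds.**
For `b ∈ (0, ∞]`, `ψ : [0, b) → ℝ` convex with `ψ(0) = ψ'(0) = 0`, datasets
`S_k = (Z_{1,k}, …, Z_{n,k})` of independent random variables and arbitrary random
variables `W_k`,
`(1/(nK²)) ∑_i ∑_k ψ*⁻¹(I(W_k; Z_{i,k})) ≤ (1/K²) ∑_k ψ*⁻¹(I(W_k; S_k)/n)`. -/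
theorem per_sample_to_per_dataset_psiInv_bound
    {Ω α β : Type*} [MeasurableSpace Ω] [MeasurableSpace α] [MeasurableSpace β]
    (P : Measure Ω) [IsProbabilityMeasure P]
    (n K : ℕ) (hn : 0 < n) (hK : 0 < K)
    (b : ℝ≥0∞) (hb : 0 < b) (ψ : ℝ → ℝ)
    (hψconv : ConvexOn ℝ {x : ℝ | 0 ≤ x ∧ ENNReal.ofReal x < b} ψ)
    (hψ0 : ψ 0 = 0)
    (hψ'0 : HasDerivWithinAt ψ 0 (Set.Ici 0) 0)
    (Z : Fin K → Fin n → Ω → α) (hZmeas : ∀ k i, Measurable (Z k i))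
    -- within each dataset `S_k`, the samples `Z_{1,k}, …, Z_{n,k}` are independent
    (hZindep : ∀ k, iIndepFun (Z k) P)
    (W : Fin K → Ω → β) (hW : ∀ k, Measurable (W k)) :
    ((n : ℝ≥0∞) * (K : ℝ≥0∞) ^ 2)⁻¹ * ∑ i : Fin n, ∑ k : Fin K,
        psiInv b ψ (mutualInfo P (W k) (Z k i))
      ≤ ((K : ℝ≥0∞) ^ 2)⁻¹ * ∑ k : Fin K,
          psiInv b ψ (mutualInfo P (W k) (fun ω => fun i => Z k i ω) / (n : ℝ≥0∞)) := by
  classical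
  have hn0 : (n : ℝ≥0∞) ≠ 0 := by simp [hn.ne']
  have hnt : (n : ℝ≥0∞) ≠ ∞ := ENNReal.natCast_ne_top n
  have hk : ∀ k : Fin K, ∑ i : Fin n, psiInv b ψ (mutualInfo P (W k) (Z k i))
      ≤ n * psiInv b ψ (mutualInfo P (W k) (fun ω => fun i => Z k i ω) / n) := by
    intro k
    by_cases hc : ((P.map fun ω => (W k ω, fun i => Z k i ω)) ≪
        ((P.map (W k)).prod (P.map fun ω (i : Fin n) => Z k i ω))) ∧
        Integrable (llr (P.map fun ω => (W k ω, fun i => Z k i ω))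
          ((P.map (W k)).prod (P.map fun ω (i : Fin n) => Z k i ω)))
          (P.map fun ω => (W k ω, fun i => Z k i ω))
    · have hsum := sum_mutualInfo_le P (W k) (hW k) n (Z k) (hZmeas k) (hZindep k)
        hc.1 hc.2
      calc ∑ i : Fin n, psiInv b ψ (mutualInfo P (W k) (Z k i))
          ≤ n * psiInv b ψ ((∑ i : Fin n, mutualInfo P (W k) (Z k i)) / n) :=
            sum_psiInv_le hn hb _
        _ ≤ n * psiInv b ψ (mutualInfo P (W k) (fun ω => fun i => Z k i ω) / n) :=
            mul_le_mul_right (psiInv_mono (ENNReal.div_le_div_right hsum _)) _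
    · have htop : mutualInfo P (W k) (fun ω => fun i => Z k i ω) = ∞ := by
        rw [mutualInfo, klDiv, if_neg hc]
      rw [htop, ENNReal.top_div_of_ne_top hnt, psiInv_top hb, ENNReal.mul_top hn0]
      exact le_top
  rw [Finset.sum_comm]
  have h1 : ∑ k : Fin K, ∑ i : Fin n, psiInv b ψ (mutualInfo P (W k) (Z k i))
      ≤ (n : ℝ≥0∞) * ∑ k : Fin K,
          psiInv b ψ (mutualInfo P (W k) (fun ω => fun i => Z k i ω) / n) := by
    rw [Finset.mul_sum]
    exact Finset.sum_le_sum fun k _ => hk k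
  calc ((n : ℝ≥0∞) * (K : ℝ≥0∞) ^ 2)⁻¹
        * ∑ k : Fin K, ∑ i : Fin n, psiInv b ψ (mutualInfo P (W k) (Z k i))
      ≤ ((n : ℝ≥0∞) * (K : ℝ≥0∞) ^ 2)⁻¹ * ((n : ℝ≥0∞) * ∑ k : Fin K,
          psiInv b ψ (mutualInfo P (W k) (fun ω => fun i => Z k i ω) / n)) :=
        mul_le_mul_right h1 _
    _ = ((K : ℝ≥0∞) ^ 2)⁻¹ * ∑ k : Fin K,
          psiInv b ψ (mutualInfo P (W k) (fun ω => fun i => Z k i ω) / n) := by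
        rw [ENNReal.mul_inv (Or.inl hn0) (Or.inl hnt), mul_comm ((n : ℝ≥0∞)⁻¹) _,
          mul_assoc, ← mul_assoc ((n : ℝ≥0∞)⁻¹), ENNReal.inv_mul_cancel hn0 hnt, one_mul]
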